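/- Let n : ℕ, let A : ℝ → Matrix (Fin n) (Fin n) ℝ be any function, and let g₁, g₂ : ℝ → Matrix (Fin n) (Fin n) ℝ satisfy, for every t ∈ ℝ and i = 1, 2, HasDerivAt gᵢ (gᵢ t * A t) t (derivative in the normed space of matrices). If g₁ t is invertible for every t, then g₂ t = g₂ 0 * (g₁ 0)⁻¹ * g₁ t for all t ∈ ℝ; that is, any two solutions of the development equation g′ = g·A differ by a constant left translation. -/

import Mathlib

attribute [local instance] Matrix.normedAddCommGroup Matrix.normedSpace

section Aux

variable {n : ℕ}

/-- Matrix multiplication as a continuous bilinear map. -/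
noncomputable def matMulCLM (n : ℕ) :
    Matrix (Fin n) (Fin n) ℝ →L[ℝ] Matrix (Fin n) (Fin n) ℝ →L[ℝ] Matrix (Fin n) (Fin n) ℝ :=
  LinearMap.toContinuousLinearMap
    { toFun := fun a => LinearMap.toContinuousLinearMap (LinearMap.mulLeft ℝ a)
      map_add' := fun a b => by ext x; simp [add_mul]
      map_smul' := fun c a => by ext x; simp [smul_mul_assoc] }

@[simp] lemma matMulCLM_apply (a b : Matrix (Fin n) (Fin n) ℝ) :
    matMulCLM n a b = a * b := rfl

lemma HasDerivAt.matmul {u v : ℝ → Matrix (Fin n) (Fin n) ℝ}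
    {u' v' : Matrix (Fin n) (Fin n) ℝ} {t : ℝ}
    (hu : HasDerivAt u u' t) (hv : HasDerivAt v v' t) :
    HasDerivAt (fun s => u s * v s) (u' * v t + u t * v') t := by
  have h := ((matMulCLM n).isBoundedBilinearMap.hasFDerivAt
    (u t, v t)).comp_hasDerivAt t (hu.prodMk hv)
  simp at h
  rw [add_comm] at h
  exact h

set_option maxHeartbeats 2000000 in
lemma tendsto_matmul {α : Type*} {l : Filter α}
    {f g : α → Matrix (Fin n) (Fin n) ℝ} {a b : Matrix (Fin n) (Fin n) ℝ}
    (hf : Filter.Tendsto f l (nhds a)) (hg : Filter.Tendsto g l (nhds b)) :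
    Filter.Tendsto (fun x => f x * g x) l (nhds (a * b)) := by
  have hmul : Continuous
      (fun p : Matrix (Fin n) (Fin n) ℝ × Matrix (Fin n) (Fin n) ℝ => p.1 * p.2) :=
    (matMulCLM n).isBoundedBilinearMap.continuous
  exact (hmul.tendsto (a, b)).comp (hf.prodMk_nhds hg)

lemma hasDerivAt_matrix_inv {g : ℝ → Matrix (Fin n) (Fin n) ℝ}
    {g' : Matrix (Fin n) (Fin n) ℝ} {t : ℝ}
    (hg : HasDerivAt g g' t) (hinv : ∀ s, IsUnit (g s)) :
    HasDerivAt (fun s => (g s)⁻¹) (-((g t)⁻¹ * g' * (g t)⁻¹)) t := by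
  have hdet : ∀ s, IsUnit (g s).det := fun s => (Matrix.isUnit_iff_isUnit_det _).mp (hinv s)
  have hBg : ∀ s, (g s)⁻¹ * g s = 1 := fun s => Matrix.nonsing_inv_mul _ (hdet s)
  have hgB : ∀ s, g s * (g s)⁻¹ = 1 := fun s => Matrix.mul_nonsing_inv _ (hdet s)
  have hcont : ContinuousAt (fun s => (g s)⁻¹) t := by
    have h1 : ContinuousAt Inv.inv (g t) :=
      continuousAt_matrix_inv (g t) (NormedRing.inverse_continuousAt (hdet t).unit)
    exact h1.comp hg.continuousAt
  replace hg := hasDerivAt_iff_tendsto_slope.mp hg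
  refine hasDerivAt_iff_tendsto_slope.mpr ?_
  have key : ∀ s : ℝ, slope (fun s => (g s)⁻¹) t s
      = (g s)⁻¹ * (-(slope g t s)) * (g t)⁻¹ := by
    intro s
    have hdiff : (g s)⁻¹ - (g t)⁻¹ = (g s)⁻¹ * (g t - g s) * (g t)⁻¹ := by
      rw [Matrix.mul_sub, Matrix.sub_mul]
      rw [mul_assoc, hgB t, mul_one, hBg s, Matrix.one_mul]
    simp only [slope_def_module, hdiff]
    have hns : -((s - t)⁻¹ • (g s - g t)) = (s - t)⁻¹ • (g t - g s) := by
      rw [← smul_neg, neg_sub]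
    rw [hns, Matrix.mul_smul, Matrix.smul_mul]
  have hlim : Filter.Tendsto (fun s => (g s)⁻¹ * (-(slope g t s)) * (g t)⁻¹)
      (nhdsWithin t {t}ᶜ) (nhds ((g t)⁻¹ * (-g') * (g t)⁻¹)) := by
    refine tendsto_matmul (tendsto_matmul ?_ hg.neg) tendsto_const_nhds
    exact hcont.continuousWithinAt.tendsto
  have hneg : -((g t)⁻¹ * g' * (g t)⁻¹) = (g t)⁻¹ * -g' * (g t)⁻¹ := by
    simp [Matrix.mul_neg, Matrix.neg_mul]
  rw [hneg]
  exact hlim.congr (fun s => (key s).symm)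

end Aux

/-- Any two solutions of the development equation `g′ = g · A` differ by a constant
left translation. -/
theorem development_unique_up_to_left_translation {n : ℕ}
    (A g₁ g₂ : ℝ → Matrix (Fin n) (Fin n) ℝ)
    (h₁ : ∀ t : ℝ, HasDerivAt g₁ (g₁ t * A t) t)
    (h₂ : ∀ t : ℝ, HasDerivAt g₂ (g₂ t * A t) t)
    (hinv : ∀ t : ℝ, IsUnit (g₁ t)) :
    ∀ t : ℝ, g₂ t = g₂ 0 * (g₁ 0)⁻¹ * g₁ t := by
  intro t
  have hdet : ∀ s, IsUnit (g₁ s).det := fun s => (Matrix.isUnit_iff_isUnit_det _).mp (hinv s)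
  have hBg : ∀ s, (g₁ s)⁻¹ * g₁ s = 1 := fun s => Matrix.nonsing_inv_mul _ (hdet s)
  have hh : ∀ s : ℝ, HasDerivAt (fun u => g₂ u * (g₁ u)⁻¹) 0 s := by
    intro s
    have hB : HasDerivAt (fun u => (g₁ u)⁻¹)
        (-((g₁ s)⁻¹ * (g₁ s * A s) * (g₁ s)⁻¹)) s :=
      hasDerivAt_matrix_inv (h₁ s) hinv
    have h := (h₂ s).matmul hB
    have hz : g₂ s * A s * (g₁ s)⁻¹
        + g₂ s * -((g₁ s)⁻¹ * (g₁ s * A s) * (g₁ s)⁻¹) = 0 := by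
      have : (g₁ s)⁻¹ * (g₁ s * A s) * (g₁ s)⁻¹ = A s * (g₁ s)⁻¹ := by
        rw [← mul_assoc, hBg s, Matrix.one_mul]
      rw [this, Matrix.mul_neg, ← mul_assoc]
      simp
    rwa [hz] at h
  have hconst : ∀ s : ℝ, g₂ s * (g₁ s)⁻¹ = g₂ 0 * (g₁ 0)⁻¹ := by
    intro s
    exact is_const_of_deriv_eq_zero (fun x => (hh x).differentiableAt)
      (fun x => (hh x).deriv) s 0
  calc g₂ t = g₂ t * ((g₁ t)⁻¹ * g₁ t) := by rw [hBg t, Matrix.mul_one]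
    _ = g₂ t * (g₁ t)⁻¹ * g₁ t := by rw [mul_assoc]
    _ = g₂ 0 * (g₁ 0)⁻¹ * g₁ t := by rw [hconst t]
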